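/- Let Θ ∈ ℝ, let a : ℝ → ℝ be twice differentiable with a(t) ≠ 0 for all t, and let ρ : ℝ → ℝ be differentiable. Assume the deformed Friedmann equations hold for all t: 3*(a'(t))² = 8*π*ρ(t)*(a(t))² and 3*a''(t)*a(t) = −4*π*ρ(t)*(a(t))² + (3/2)*Θ². Then for all t, the derivative of the function s ↦ ρ(s)*(a(s))³ at t equals (3/(8*π))*Θ²*a'(t). -/

import Mathlib

open Real

theorem deformed_FRW_continuity_deriv
    (Θ : ℝ) (a ρ : ℝ → ℝ)
    (ha : Differentiable ℝ a) (ha' : Differentiable ℝ (deriv a))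
    (hρ : Differentiable ℝ ρ)
    (hane : ∀ t, a t ≠ 0)
    (heq1 : ∀ t, 3 * (deriv a t) ^ 2 = 8 * π * ρ t * (a t) ^ 2)
    (heq2 : ∀ t, 3 * deriv (deriv a) t * a t = -4 * π * ρ t * (a t) ^ 2 + (3 / 2) * Θ ^ 2) :
    ∀ t, deriv (fun s => ρ s * (a s) ^ 3) t = (3 / (8 * π)) * Θ ^ 2 * deriv a t := by
  intro t
  have hat := (ha t).hasDerivAt
  have hat' := (ha' t).hasDerivAt
  have hrt := (hρ t).hasDerivAt
  -- derivative of LHS of heq1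
  have hL : HasDerivAt (fun s => 3 * (deriv a s) ^ 2)
      (3 * (2 * deriv a t * deriv (deriv a) t)) t := by
    have := (hat'.fun_pow 2).const_mul 3
    convert this using 1
    · rfl
    · rfl
    push_cast
    ring
  have hR : HasDerivAt (fun s => 8 * π * ρ s * (a s) ^ 2)
      (8 * π * deriv ρ t * (a t) ^ 2 + 8 * π * ρ t * (2 * a t * deriv a t)) t := by
    have := ((hrt.const_mul (8 * π)).fun_mul (hat.fun_pow 2))
    convert this using 1
    · rfl
    · rfl
    ring
  have hfun : (fun s => 3 * (deriv a s) ^ 2) = fun s => 8 * π * ρ s * (a s) ^ 2 := by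
    funext s; exact heq1 s
  have hkey : 3 * (2 * deriv a t * deriv (deriv a) t)
      = 8 * π * deriv ρ t * (a t) ^ 2 + 8 * π * ρ t * (2 * a t * deriv a t) := by
    have h2 : HasDerivAt (fun s => 3 * (deriv a s) ^ 2)
        (8 * π * deriv ρ t * (a t) ^ 2 + 8 * π * ρ t * (2 * a t * deriv a t)) t := by
      rw [hfun]; exact hR
    exact hL.unique h2
  have hd : deriv (fun s => ρ s * (a s) ^ 3) t
      = deriv ρ t * (a t) ^ 3 + ρ t * (3 * (a t) ^ 2 * deriv a t) := by
    exact (hrt.mul (hat.pow 3)).deriv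
  rw [hd]
  have h2 := heq2 t
  have hπ : (8 : ℝ) * π ≠ 0 := by positivity
  field_simp
  linear_combination -(a t) * hkey + 2 * deriv a t * h2
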